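/- Let (H, Δ, ε) be a bialgebra over a commutative ring k, F a Drinfel'd twist on H, and A a left H-module algebra with product · and unit 1. Write F⁻¹ = Σⱼ uⱼ⊗vⱼ and define the twisted product a ⋆_F b := Σⱼ (uⱼ▷a)·(vⱼ▷b) for a, b ∈ A. Then ⋆_F is an associative product on A with unit 1, and A with ⋆_F and the unchanged H-action is a left module algebra over the twisted bialgebra (H, Δ_F, ε): writing Δ_F(ξ) = Σ ξ^F₍₁₎⊗ξ^F₍₂₎, one has ξ▷(a ⋆_F b) = Σ (ξ^F₍₁₎▷a) ⋆_F (ξ^F₍₂₎▷b) and ξ▷1 = ε(ξ)·1 for all ξ ∈ H and a, b ∈ A. -/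

import Mathlib

/-!
STATEMENT 15: For a Drinfel'd twist `F` on a bialgebra `H` and a left `H`-module
algebra `A`, the twisted product `a ⋆_F b := Σ (uⱼ▷a)·(vⱼ▷b)` (where `F⁻¹ = Σ uⱼ⊗vⱼ`)
is associative with unit `1`, and `(A, ⋆_F)` is a left module algebra over the
twisted bialgebra `(H, Δ_F, ε)`.
-/

open TensorProduct

noncomputable section

namespace Stmt

variable (k : Type*) [CommRing k] (H : Type*) [Ring H] [Bialgebra k H]
variable (A : Type*) [Ring A] [Algebra k A]
variable [Module H A] [IsScalarTower k H A] [SMulCommClass k H A]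

/-- The action of `H` on `A` as a `k`-bilinear map. -/
def actE : H →ₗ[k] A →ₗ[k] A :=
  LinearMap.mk₂ k (fun ξ a => ξ • a)
    (fun ξ η a => add_smul ξ η a)
    (fun c ξ a => smul_assoc c ξ a)
    (fun ξ a b => smul_add ξ a b)
    (fun c ξ a => (smul_comm c ξ a).symm)

/-- The componentwise action of `T ∈ H ⊗ H` on `A ⊗ A`. -/
def act2 (T : H ⊗[k] H) : A ⊗[k] A →ₗ[k] A ⊗[k] A :=
  TensorProduct.homTensorHomMap (RingHom.id k) A A A A
    ((TensorProduct.map (actE k H A) (actE k H A)) T)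

/-- For a `k`-bilinear map `Bm` on `A` and `T = Σ u ⊗ v ∈ H ⊗ H`, the bilinear map
`(a, b) ↦ Σ Bm (u • a) (v • b)` (a "Sweedler sum"). -/
def hodgeL (Bm : A →ₗ[k] A →ₗ[k] A) (T : H ⊗[k] H) : A →ₗ[k] A →ₗ[k] A :=
  (TensorProduct.mk k A A).compr₂ ((TensorProduct.lift Bm).comp (act2 k H A T))

section BialgebraMaps

/-- Comultiplication as an algebra homomorphism. -/
def Δ : H →ₐ[k] H ⊗[k] H := Bialgebra.comulAlgHom k H

/-- Counit as an algebra homomorphism. -/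
def ε : H →ₐ[k] k := Bialgebra.counitAlgHom k H

/-- Leg embedding `x ↦ x₁₂` of `H ⊗ H` into `H ⊗ H ⊗ H`. -/
def ι₁₂ : H ⊗[k] H →ₐ[k] H ⊗[k] (H ⊗[k] H) :=
  Algebra.TensorProduct.map (AlgHom.id k H) Algebra.TensorProduct.includeLeft

/-- Leg embedding `x ↦ x₂₃` of `H ⊗ H` into `H ⊗ H ⊗ H`. -/
def ι₂₃ : H ⊗[k] H →ₐ[k] H ⊗[k] (H ⊗[k] H) :=
  Algebra.TensorProduct.includeRight

/-- `Δ ⊗ id : H ⊗ H → H ⊗ H ⊗ H` (re-associated). -/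
def Δ₁ : H ⊗[k] H →ₐ[k] H ⊗[k] (H ⊗[k] H) :=
  (Algebra.TensorProduct.assoc k k k H H H).toAlgHom.comp
    (Algebra.TensorProduct.map (Δ k H) (AlgHom.id k H))

/-- `id ⊗ Δ : H ⊗ H → H ⊗ H ⊗ H`. -/
def Δ₂ : H ⊗[k] H →ₐ[k] H ⊗[k] (H ⊗[k] H) :=
  Algebra.TensorProduct.map (AlgHom.id k H) (Δ k H)

/-- `ε ⊗ id : H ⊗ H → H`. -/
def ε₁ : H ⊗[k] H →ₐ[k] H :=
  (Algebra.TensorProduct.lid k H).toAlgHom.comp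
    (Algebra.TensorProduct.map (ε k H) (AlgHom.id k H))

/-- `id ⊗ ε : H ⊗ H → H`. -/
def ε₂ : H ⊗[k] H →ₐ[k] H :=
  (Algebra.TensorProduct.rid k k H).toAlgHom.comp
    (Algebra.TensorProduct.map (AlgHom.id k H) (ε k H))

end BialgebraMaps


section Aux

/-- `act2` as a linear map in `T`. -/
def act2lin : H ⊗[k] H →ₗ[k] (A ⊗[k] A →ₗ[k] A ⊗[k] A) :=
  (TensorProduct.homTensorHomMap (RingHom.id k) A A A A).comp
    (TensorProduct.map (actE k H A) (actE k H A))

lemma act2_eq (T : H ⊗[k] H) : act2 k H A T = act2lin k H A T := rfl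

lemma act2lin_tmul (ξ η : H) :
    act2lin k H A (ξ ⊗ₜ η) = TensorProduct.map (actE k H A ξ) (actE k H A η) := by
  simp [act2lin]

lemma actE_mul (ξ η : H) :
    actE k H A (ξ * η) = actE k H A ξ ∘ₗ actE k H A η := by
  ext a; simp [actE, mul_smul]

lemma act2lin_mul (S T : H ⊗[k] H) :
    act2lin k H A (S * T) = act2lin k H A S ∘ₗ act2lin k H A T := by
  induction S using TensorProduct.induction_on with
  | zero => simp
  | tmul ξ η =>
    induction T using TensorProduct.induction_on with
    | zero => simp
    | tmul ξ' η' =>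
      rw [Algebra.TensorProduct.tmul_mul_tmul, act2lin_tmul, act2lin_tmul, act2lin_tmul,
        actE_mul, actE_mul, TensorProduct.map_comp]
    | add x y hx hy =>
      rw [mul_add, map_add, hx, hy, map_add, LinearMap.comp_add]
  | add x y hx hy =>
    rw [add_mul, map_add, hx, hy, map_add, LinearMap.add_comp]

/-- componentwise action of `H ⊗ (H ⊗ H)` on `A ⊗ (A ⊗ A)`. -/
def act3lin : H ⊗[k] (H ⊗[k] H) →ₗ[k] (A ⊗[k] (A ⊗[k] A) →ₗ[k] A ⊗[k] (A ⊗[k] A)) :=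
  (TensorProduct.homTensorHomMap (RingHom.id k) A (A ⊗[k] A) A (A ⊗[k] A)).comp
    (TensorProduct.map (actE k H A) (act2lin k H A))

lemma act3lin_tmul (ξ : H) (T : H ⊗[k] H) :
    act3lin k H A (ξ ⊗ₜ T) = TensorProduct.map (actE k H A ξ) (act2lin k H A T) := by
  simp [act3lin]

lemma act3lin_mul (S T : H ⊗[k] (H ⊗[k] H)) :
    act3lin k H A (S * T) = act3lin k H A S ∘ₗ act3lin k H A T := by
  induction S using TensorProduct.induction_on with
  | zero => simp
  | tmul ξ X =>
    induction T using TensorProduct.induction_on with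
    | zero => simp
    | tmul ξ' X' =>
      rw [Algebra.TensorProduct.tmul_mul_tmul, act3lin_tmul, act3lin_tmul, act3lin_tmul,
        actE_mul, act2lin_mul, TensorProduct.map_comp]
    | add x y hx hy =>
      rw [mul_add, map_add, hx, hy, map_add, LinearMap.comp_add]
  | add x y hx hy =>
    rw [add_mul, map_add, hx, hy, map_add, LinearMap.add_comp]

end Aux

section Aux2

local notation "m2" => TensorProduct.lift (LinearMap.mul k A)

lemma m2_tmul (a b : A) : TensorProduct.lift (LinearMap.mul k A) (a ⊗ₜ[k] b) = a * b := by
  simp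

lemma hodgeL_apply (Bm : A →ₗ[k] A →ₗ[k] A) (T : H ⊗[k] H) (a b : A) :
    hodgeL k H A Bm T a b = TensorProduct.lift Bm (act2lin k H A T (a ⊗ₜ b)) := rfl

lemma act2lin_tmul_apply (ξ η : H) (a b : A) :
    act2lin k H A (ξ ⊗ₜ η) (a ⊗ₜ b) = (ξ • a) ⊗ₜ[k] (η • b) := by
  rw [act2lin_tmul]; simp [actE]

/-- operator form of the module-algebra axiom -/
lemma hMA' (hMA : ∀ (ξ : H) (a b : A),
      ξ • (a * b) = hodgeL k H A (LinearMap.mul k A) (Coalgebra.comul (R := k) ξ) a b)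
    (ξ : H) (x : A ⊗[k] A) :
    ξ • TensorProduct.lift (LinearMap.mul k A) x
      = TensorProduct.lift (LinearMap.mul k A)
          (act2lin k H A (Coalgebra.comul (R := k) ξ) x) := by
  induction x using TensorProduct.induction_on with
  | zero => simp
  | tmul a b => rw [m2_tmul, hMA ξ a b]; rfl
  | add x y hx hy => rw [map_add, smul_add, hx, hy, map_add, map_add]

lemma sub3 (Z : H ⊗[k] H) (η : H) (y : A ⊗[k] A) (c : A) :
    (TensorProduct.lift (LinearMap.mul k A) (act2lin k H A Z y)) * (η • c)
      = TensorProduct.lift (LinearMap.mul k A)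
          (TensorProduct.map LinearMap.id (TensorProduct.lift (LinearMap.mul k A))
            (act3lin k H A (Algebra.TensorProduct.assoc k k k H H H (Z ⊗ₜ η))
              ((TensorProduct.assoc k A A A) (y ⊗ₜ c)))) := by
  induction Z using TensorProduct.induction_on with
  | zero => simp
  | tmul z₁ z₂ =>
    induction y using TensorProduct.induction_on with
    | zero => simp
    | tmul a b =>
      rw [Algebra.TensorProduct.assoc_tmul, act3lin_tmul, TensorProduct.assoc_tmul,
        act2lin_tmul_apply, m2_tmul]
      simp [act2lin_tmul_apply, actE, mul_assoc]
    | add x y hx hy =>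
      simp only [TensorProduct.add_tmul, TensorProduct.tmul_add, map_add, LinearMap.add_apply,
        add_mul, mul_add, hx, hy]
  | add x y hx hy =>
    simp only [TensorProduct.add_tmul, map_add, LinearMap.add_apply, add_mul, hx, hy]

end Aux2

section Aux3

lemma sub4 (T : H ⊗[k] H) (a b c : A) :
    act3lin k H A (ι₁₂ k H T) (a ⊗ₜ (b ⊗ₜ c))
      = (TensorProduct.assoc k A A A) ((act2lin k H A T (a ⊗ₜ b)) ⊗ₜ c) := by
  induction T using TensorProduct.induction_on with
  | zero =>
    rw [map_zero, map_zero, LinearMap.zero_apply, map_zero, LinearMap.zero_apply,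
      TensorProduct.zero_tmul, LinearEquiv.map_zero]
  | tmul u v =>
    simp only [ι₁₂, Algebra.TensorProduct.map_tmul, AlgHom.coe_id, id_eq,
      Algebra.TensorProduct.includeLeft_apply, act3lin_tmul, act2lin_tmul,
      TensorProduct.map_tmul, act2lin_tmul_apply, TensorProduct.assoc_tmul]
    simp [actE, act2lin_tmul_apply]
  | add x y hx hy =>
    simp only [map_add, LinearMap.add_apply, TensorProduct.add_tmul, hx, hy]

lemma sub2gen (hMA : ∀ (ξ : H) (a b : A),
      ξ • (a * b) = hodgeL k H A (LinearMap.mul k A) (Coalgebra.comul (R := k) ξ) a b)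
    (S : H ⊗[k] H) (y : A ⊗[k] A) (c : A) :
    TensorProduct.lift (LinearMap.mul k A)
        (act2lin k H A S ((TensorProduct.lift (LinearMap.mul k A) y) ⊗ₜ c))
      = TensorProduct.lift (LinearMap.mul k A)
          (TensorProduct.map LinearMap.id (TensorProduct.lift (LinearMap.mul k A))
            (act3lin k H A (Δ₁ k H S) ((TensorProduct.assoc k A A A) (y ⊗ₜ c)))) := by
  induction S using TensorProduct.induction_on with
  | zero => simp
  | tmul ξ η =>
    have hΔ₁ : Δ₁ k H (ξ ⊗ₜ η)
        = Algebra.TensorProduct.assoc k k k H H H ((Δ k H ξ) ⊗ₜ η) := by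
      simp [Δ₁]
    rw [act2lin_tmul_apply, m2_tmul, hMA' k H A hMA, sub3, hΔ₁]
    rfl
  | add x y hx hy =>
    simp only [map_add, LinearMap.add_apply, hx, hy]

lemma lemA (hMA : ∀ (ξ : H) (a b : A),
      ξ • (a * b) = hodgeL k H A (LinearMap.mul k A) (Coalgebra.comul (R := k) ξ) a b)
    (S T : H ⊗[k] H) (a b c : A) :
    TensorProduct.lift (LinearMap.mul k A)
        (act2lin k H A S
          ((TensorProduct.lift (LinearMap.mul k A) (act2lin k H A T (a ⊗ₜ b))) ⊗ₜ c))
      = TensorProduct.lift (LinearMap.mul k A)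
          (TensorProduct.map LinearMap.id (TensorProduct.lift (LinearMap.mul k A))
            (act3lin k H A (Δ₁ k H S * ι₁₂ k H T) (a ⊗ₜ (b ⊗ₜ c)))) := by
  rw [sub2gen k H A hMA, act3lin_mul, LinearMap.comp_apply, sub4]

lemma sub3' (ξ : H) (W : H ⊗[k] H) (a : A) (z : A ⊗[k] A) :
    (ξ • a) * TensorProduct.lift (LinearMap.mul k A) (act2lin k H A W z)
      = TensorProduct.lift (LinearMap.mul k A)
          (TensorProduct.map LinearMap.id (TensorProduct.lift (LinearMap.mul k A))
            (act3lin k H A (ξ ⊗ₜ W) (a ⊗ₜ z))) := by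
  induction z using TensorProduct.induction_on with
  | zero => simp
  | tmul b c =>
    induction W using TensorProduct.induction_on with
    | zero => simp
    | tmul w₁ w₂ =>
      rw [act3lin_tmul, act2lin_tmul_apply, TensorProduct.map_tmul, TensorProduct.map_tmul,
        act2lin_tmul_apply, m2_tmul, m2_tmul]
      simp [actE]
    | add x y hx hy =>
      simp only [TensorProduct.tmul_add, map_add, LinearMap.add_apply, mul_add, hx, hy]
  | add x y hx hy =>
    simp only [map_add, TensorProduct.tmul_add, LinearMap.add_apply, mul_add, hx, hy]

lemma sub2'gen (hMA : ∀ (ξ : H) (a b : A),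
      ξ • (a * b) = hodgeL k H A (LinearMap.mul k A) (Coalgebra.comul (R := k) ξ) a b)
    (S : H ⊗[k] H) (a : A) (z : A ⊗[k] A) :
    TensorProduct.lift (LinearMap.mul k A)
        (act2lin k H A S (a ⊗ₜ (TensorProduct.lift (LinearMap.mul k A) z)))
      = TensorProduct.lift (LinearMap.mul k A)
          (TensorProduct.map LinearMap.id (TensorProduct.lift (LinearMap.mul k A))
            (act3lin k H A (Δ₂ k H S) (a ⊗ₜ z))) := by
  induction S using TensorProduct.induction_on with
  | zero => simp
  | tmul ξ η =>
    have hΔ₂ : Δ₂ k H (ξ ⊗ₜ η) = ξ ⊗ₜ (Δ k H η) := by simp [Δ₂]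
    rw [act2lin_tmul_apply, m2_tmul]
    have : (η : H) • TensorProduct.lift (LinearMap.mul k A) z
        = TensorProduct.lift (LinearMap.mul k A)
            (act2lin k H A (Coalgebra.comul (R := k) η) z) := hMA' k H A hMA η z
    rw [show (ξ • a) * (η • TensorProduct.lift (LinearMap.mul k A) z)
        = (ξ • a) * TensorProduct.lift (LinearMap.mul k A)
            (act2lin k H A (Coalgebra.comul (R := k) η) z) by rw [this],
      sub3', hΔ₂]
    rfl
  | add x y hx hy =>
    simp only [map_add, LinearMap.add_apply, hx, hy]

lemma sub4' (T : H ⊗[k] H) (a : A) (z : A ⊗[k] A) :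
    act3lin k H A (ι₂₃ k H T) (a ⊗ₜ z) = a ⊗ₜ (act2lin k H A T z) := by
  induction T using TensorProduct.induction_on with
  | zero => simp [ι₂₃]
  | tmul u v =>
    rw [show ι₂₃ k H (u ⊗ₜ v) = (1 : H) ⊗ₜ (u ⊗ₜ[k] v) from rfl, act3lin_tmul,
      TensorProduct.map_tmul]
    simp [actE]
  | add x y hx hy =>
    simp only [map_add, LinearMap.add_apply, TensorProduct.tmul_add, hx, hy]

lemma lemB (hMA : ∀ (ξ : H) (a b : A),
      ξ • (a * b) = hodgeL k H A (LinearMap.mul k A) (Coalgebra.comul (R := k) ξ) a b)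
    (S T : H ⊗[k] H) (a b c : A) :
    TensorProduct.lift (LinearMap.mul k A)
        (act2lin k H A S
          (a ⊗ₜ (TensorProduct.lift (LinearMap.mul k A) (act2lin k H A T (b ⊗ₜ c)))))
      = TensorProduct.lift (LinearMap.mul k A)
          (TensorProduct.map LinearMap.id (TensorProduct.lift (LinearMap.mul k A))
            (act3lin k H A (Δ₂ k H S * ι₂₃ k H T) (a ⊗ₜ (b ⊗ₜ c)))) := by
  rw [sub2'gen k H A hMA, act3lin_mul, LinearMap.comp_apply, sub4']

end Aux3

section Aux4

lemma unitL (hone : ∀ ξ : H, ξ • (1 : A) = Coalgebra.counit (R := k) ξ • (1 : A))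
    (T : H ⊗[k] H) (a : A) :
    TensorProduct.lift (LinearMap.mul k A) (act2lin k H A T ((1 : A) ⊗ₜ a))
      = ε₁ k H T • a := by
  induction T using TensorProduct.induction_on with
  | zero => simp
  | tmul u v =>
    rw [act2lin_tmul_apply, m2_tmul, hone u]
    have hε : ε₁ k H (u ⊗ₜ v) = Coalgebra.counit (R := k) u • v := by
      simp [ε₁, ε]
    rw [hε, smul_mul_assoc, one_mul, smul_assoc]
  | add x y hx hy =>
    simp only [map_add, LinearMap.add_apply, hx, hy, add_smul]

lemma unitR (hone : ∀ ξ : H, ξ • (1 : A) = Coalgebra.counit (R := k) ξ • (1 : A))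
    (T : H ⊗[k] H) (a : A) :
    TensorProduct.lift (LinearMap.mul k A) (act2lin k H A T (a ⊗ₜ (1 : A)))
      = ε₂ k H T • a := by
  induction T using TensorProduct.induction_on with
  | zero => simp
  | tmul u v =>
    rw [act2lin_tmul_apply, m2_tmul, hone v]
    have hε : ε₂ k H (u ⊗ₜ v) = Coalgebra.counit (R := k) v • u := by
      simp [ε₂, ε]
    rw [hε, mul_smul_comm, mul_one, smul_assoc]
  | add x y hx hy =>
    simp only [map_add, LinearMap.add_apply, hx, hy, add_smul]

lemma starLift (Finv : H ⊗[k] H) (z : A ⊗[k] A) :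
    TensorProduct.lift (hodgeL k H A (LinearMap.mul k A) Finv) z
      = TensorProduct.lift (LinearMap.mul k A) (act2lin k H A Finv z) := by
  induction z using TensorProduct.induction_on with
  | zero => simp
  | tmul a b => rw [TensorProduct.lift.tmul]; rfl
  | add x y hx hy => simp only [map_add, hx, hy]

end Aux4

section CocycleInv

lemma cocycle_inv {B : Type*} [Monoid B] (p p' q q' r r' s s' : B)
    (hp : p * p' = 1) (hp' : p' * p = 1) (hq : q * q' = 1) (hq' : q' * q = 1)
    (hr : r * r' = 1) (hr' : r' * r = 1) (hs : s * s' = 1) (hs' : s' * s = 1)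
    (h : p * q = r * s) : q' * p' = s' * r' := by
  have hPQ : (⟨p, p', hp, hp'⟩ : Bˣ) * ⟨q, q', hq, hq'⟩
      = (⟨r, r', hr, hr'⟩ : Bˣ) * ⟨s, s', hs, hs'⟩ := Units.ext h
  have h2 := congrArg (fun u : Bˣ => ((u⁻¹ : Bˣ) : B)) hPQ
  simpa [mul_inv_rev] using h2

end CocycleInv
/-- **Twisting a module algebra.**  Let `A` be a left `H`-module algebra (the module
algebra axioms are the hypotheses `hMA`, `hone`) and `F` a Drinfel'd twist on `H`
with two-sided inverse `Finv`.  Then the twisted product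
`a ⋆_F b = Σ (uⱼ ▷ a)·(vⱼ ▷ b)`, `F⁻¹ = Σ uⱼ ⊗ vⱼ`, i.e. `hodgeL (mul) Finv`, is
associative with unit `1`, and `A` with `⋆_F` and the unchanged `H`-action is a left
module algebra over the twisted bialgebra `(H, Δ_F, ε)`. -/
theorem twisted_module_algebra
    -- `A` is a left `H`-module algebra:
    (hMA : ∀ (ξ : H) (a b : A),
      ξ • (a * b) = hodgeL k H A (LinearMap.mul k A) (Coalgebra.comul (R := k) ξ) a b)
    (hone : ∀ ξ : H, ξ • (1 : A) = Coalgebra.counit (R := k) ξ • (1 : A))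
    -- `F` is a Drinfel'd twist on `H`:
    (F Finv : H ⊗[k] H)
    (hF : F * Finv = 1) (hF' : Finv * F = 1)
    (hnorm₁ : ε₁ k H F = 1) (hnorm₂ : ε₂ k H F = 1)
    (hcoc : ι₁₂ k H F * Δ₁ k H F = ι₂₃ k H F * Δ₂ k H F) :
    -- the twisted product is associative:
    (∀ a b c : A,
      hodgeL k H A (LinearMap.mul k A) Finv
          (hodgeL k H A (LinearMap.mul k A) Finv a b) c =
        hodgeL k H A (LinearMap.mul k A) Finv a
          (hodgeL k H A (LinearMap.mul k A) Finv b c)) ∧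
    -- `1` is a unit for the twisted product:
    (∀ a : A, hodgeL k H A (LinearMap.mul k A) Finv 1 a = a) ∧
    (∀ a : A, hodgeL k H A (LinearMap.mul k A) Finv a 1 = a) ∧
    -- `(A, ⋆_F)` is a left `(H, Δ_F, ε)`-module algebra:
    (∀ (ξ : H) (a b : A),
      ξ • (hodgeL k H A (LinearMap.mul k A) Finv a b) =
        hodgeL k H A (hodgeL k H A (LinearMap.mul k A) Finv)
          (F * Coalgebra.comul (R := k) ξ * Finv) a b) ∧
    (∀ ξ : H, ξ • (1 : A) = Coalgebra.counit (R := k) ξ • (1 : A)) := by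
  have inv1 : ∀ (φ : H ⊗[k] H →ₐ[k] H ⊗[k] (H ⊗[k] H)), φ F * φ Finv = 1 := by
    intro φ; rw [← map_mul, hF, map_one]
  have inv2 : ∀ (φ : H ⊗[k] H →ₐ[k] H ⊗[k] (H ⊗[k] H)), φ Finv * φ F = 1 := by
    intro φ; rw [← map_mul, hF', map_one]
  have key : Δ₁ k H Finv * ι₁₂ k H Finv = Δ₂ k H Finv * ι₂₃ k H Finv :=
    cocycle_inv _ _ _ _ _ _ _ _ (inv1 (ι₁₂ k H)) (inv2 (ι₁₂ k H)) (inv1 (Δ₁ k H))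
      (inv2 (Δ₁ k H)) (inv1 (ι₂₃ k H)) (inv2 (ι₂₃ k H)) (inv1 (Δ₂ k H)) (inv2 (Δ₂ k H)) hcoc
  have hε₁ : ε₁ k H Finv = 1 := by
    have h := congrArg (ε₁ k H) hF
    rw [map_mul, map_one, hnorm₁, one_mul] at h
    exact h
  have hε₂ : ε₂ k H Finv = 1 := by
    have h := congrArg (ε₂ k H) hF
    rw [map_mul, map_one, hnorm₂, one_mul] at h
    exact h
  refine ⟨?_, ?_, ?_, ?_, hone⟩
  · intro a b c
    rw [hodgeL_apply, hodgeL_apply, hodgeL_apply, hodgeL_apply, lemA k H A hMA, key,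
      ← lemB k H A hMA]
  · intro a
    rw [hodgeL_apply, unitL k H A hone, hε₁, one_smul]
  · intro a
    rw [hodgeL_apply, unitR k H A hone, hε₂, one_smul]
  · intro ξ a b
    rw [hodgeL_apply, hodgeL_apply, hMA' k H A hMA, starLift]
    have e : Finv * (F * Coalgebra.comul (R := k) ξ * Finv)
        = Coalgebra.comul (R := k) ξ * Finv := by
      rw [← mul_assoc, ← mul_assoc, hF', one_mul]
    have e2 : act2lin k H A Finv
          (act2lin k H A (F * Coalgebra.comul (R := k) ξ * Finv) (a ⊗ₜ[k] b))
        = act2lin k H A (Coalgebra.comul (R := k) ξ * Finv) (a ⊗ₜ[k] b) := by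
      rw [← e]
      conv_rhs => rw [act2lin_mul]
      rfl
    rw [e2]
    conv_rhs => rw [act2lin_mul]
    rfl

end Stmt
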